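/- Let A be an expanding integer n×n matrix and D a complete set of coset representatives of ℤⁿ/A(ℤⁿ). If the translates {T + z : z ∈ ℤⁿ} of T = T(A,D) have pairwise null intersections (λ((T+z) ∩ (T+z')) = 0 for z ≠ z'), then λ(T) = 1. -/

import Mathlib

open Matrix Polynomial Filter Topology MeasureTheory
open scoped NNReal ENNReal

def IsExpanding {n : ℕ} (A : Matrix (Fin n) (Fin n) ℤ) : Prop :=
  ∀ μ : ℂ, (A.map (Int.cast : ℤ → ℂ)).charpoly.IsRoot μ → 1 < ‖μ‖

namespace Stmt19

attribute [local instance] Matrix.linftyOpNormedAddCommGroup Matrix.linftyOpNormedRing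
  Matrix.linftyOpNormedAlgebra Matrix.linftyOpNormedSpace

variable {n : ℕ} (A : Matrix (Fin n) (Fin n) ℤ)

lemma eval_charpoly' (M : Matrix (Fin n) (Fin n) ℂ) (μ : ℂ) :
    M.charpoly.eval μ = (Matrix.scalar _ μ - M).det := by
  rw [Matrix.charpoly, _root_.eval_det, Matrix.matPolyEquiv_charmatrix]
  simp

lemma mem_spectrum_iff_isRoot (M : Matrix (Fin n) (Fin n) ℂ) (μ : ℂ) :
    μ ∈ spectrum ℂ M ↔ M.charpoly.IsRoot μ := by
  rw [spectrum.mem_iff, Polynomial.IsRoot, eval_charpoly']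
  have h : (algebraMap ℂ (Matrix (Fin n) (Fin n) ℂ)) μ = Matrix.scalar _ μ := rfl
  rw [h, Matrix.isUnit_iff_isUnit_det, isUnit_iff_ne_zero]
  tauto

noncomputable abbrev AR : Matrix (Fin n) (Fin n) ℝ := A.map (Int.cast : ℤ → ℝ)
noncomputable abbrev B : Matrix (Fin n) (Fin n) ℝ := (AR A)⁻¹
noncomputable abbrev AC : Matrix (Fin n) (Fin n) ℂ := A.map (Int.cast : ℤ → ℂ)

lemma AR_map : (AR A).map (algebraMap ℝ ℂ) = AC A := by
  ext i j; simp [Matrix.map_apply]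

lemma isUnit_det_AC (hA : IsExpanding A) : (AC A).det ≠ 0 := by
  intro h
  have h0 : (AC A).charpoly.IsRoot 0 := by
    rw [Polynomial.IsRoot, ← Polynomial.coeff_zero_eq_eval_zero]
    have := Matrix.det_eq_sign_charpoly_coeff (AC A)
    rw [h] at this
    have h2 : ((-1 : ℂ) ^ Fintype.card (Fin n)) ≠ 0 := by
      simp [pow_ne_zero]
    field_simp at this
    exact (mul_eq_zero.mp this.symm).resolve_left h2
  have := hA 0 h0
  rw [norm_zero] at this
  linarith

lemma isUnit_det_AR (hA : IsExpanding A) : IsUnit (AR A).det := by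
  rw [isUnit_iff_ne_zero]
  intro h
  apply isUnit_det_AC A hA
  have h2 := (algebraMap ℝ ℂ).map_det (AR A)
  rw [RingHom.mapMatrix_apply, AR_map, h, map_zero] at h2
  exact h2.symm

lemma B_mul_AR (hA : IsExpanding A) : B A * AR A = 1 :=
  Matrix.nonsing_inv_mul _ (isUnit_det_AR A hA)

lemma AR_mul_B (hA : IsExpanding A) : AR A * B A = 1 :=
  Matrix.mul_nonsing_inv _ (isUnit_det_AR A hA)

noncomputable abbrev BC : Matrix (Fin n) (Fin n) ℂ := (B A).map (algebraMap ℝ ℂ)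

lemma BC_mul_AC (hA : IsExpanding A) : BC A * AC A = 1 := by
  rw [← AR_map, ← Matrix.map_mul, B_mul_AR A hA, Matrix.map_one _ (map_zero _) (map_one _)]

lemma AC_mul_BC (hA : IsExpanding A) : AC A * BC A = 1 := by
  rw [← AR_map, ← Matrix.map_mul, AR_mul_B A hA, Matrix.map_one _ (map_zero _) (map_one _)]

lemma nnnorm_lt_one_of_mem_spectrum (hA : IsExpanding A) {z : ℂ}
    (hz : z ∈ spectrum ℂ (BC A)) : ‖z‖₊ < 1 := by
  set u : (Matrix (Fin n) (Fin n) ℂ)ˣ := ⟨AC A, BC A, AC_mul_BC A hA, BC_mul_AC A hA⟩ with hu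
  have hz0 : z ≠ 0 := by
    rintro rfl
    exact (spectrum.zero_mem_iff ℂ).mp hz ⟨u⁻¹, rfl⟩
  set r : ℂˣ := (Units.mk0 z hz0)⁻¹ with hr
  have h1 : ((r⁻¹ : ℂˣ) : ℂ) ∈ spectrum ℂ ((u⁻¹ : (Matrix (Fin n) (Fin n) ℂ)ˣ) : Matrix (Fin n) (Fin n) ℂ) := by
    have e1 : ((r⁻¹ : ℂˣ) : ℂ) = z := by simp [hr]
    have e2 : ((u⁻¹ : (Matrix (Fin n) (Fin n) ℂ)ˣ) : Matrix (Fin n) (Fin n) ℂ) = BC A := rfl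
    rw [e1, e2]; exact hz
  have h2 : ((r : ℂˣ) : ℂ) ∈ spectrum ℂ ((u : Matrix (Fin n) (Fin n) ℂ)) :=
    spectrum.inv_mem_iff.mpr h1
  have h3 : (AC A).charpoly.IsRoot z⁻¹ := by
    rw [← mem_spectrum_iff_isRoot]
    have e1 : ((r : ℂˣ) : ℂ) = z⁻¹ := by simp [hr]
    have e2 : ((u : (Matrix (Fin n) (Fin n) ℂ)ˣ) : Matrix (Fin n) (Fin n) ℂ) = AC A := rfl
    rw [e1, e2] at h2; exact h2
  have h4 := hA _ h3
  rw [norm_inv, one_lt_inv_iff₀] at h4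
  have h5 : ‖z‖ < 1 := h4.2
  exact_mod_cast h5

lemma nnnorm_map_complex (M : Matrix (Fin n) (Fin n) ℝ) :
    ‖M.map (algebraMap ℝ ℂ)‖₊ = ‖M‖₊ := by
  rw [Matrix.linfty_opNNNorm_def, Matrix.linfty_opNNNorm_def]
  simp [Matrix.map_apply]

lemma specRad_lt_one (hA : IsExpanding A) : spectralRadius ℂ (BC A) < 1 := by
  haveI : CompleteSpace (Matrix (Fin n) (Fin n) ℂ) := FiniteDimensional.complete ℂ _
  rcases Set.eq_empty_or_nonempty (spectrum ℂ (BC A)) with h | h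
  · rw [spectralRadius]
    simp [h]
  · have := spectrum.spectralRadius_lt_of_forall_lt_of_nonempty h
      (r := 1) (fun z hz => nnnorm_lt_one_of_mem_spectrum A hA hz)
    simpa using this

lemma eventually_geom (hA : IsExpanding A) :
    ∃ r : ℝ≥0, r < 1 ∧ ∀ᶠ k in atTop, ‖B A ^ k‖ ≤ (r : ℝ) ^ k := by
  haveI : CompleteSpace (Matrix (Fin n) (Fin n) ℂ) := FiniteDimensional.complete ℂ _
  obtain ⟨r', hr1, hr2⟩ := exists_between (specRad_lt_one A hA)
  lift r' to ℝ≥0 using (hr2.trans_le le_top).ne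
  refine ⟨r', by exact_mod_cast hr2, ?_⟩
  have hg := spectrum.pow_nnnorm_pow_one_div_tendsto_nhds_spectralRadius (BC A)
  have hev : ∀ᶠ k : ℕ in atTop, (‖BC A ^ k‖₊ : ℝ≥0∞) ^ (1/(k:ℝ)) < (r' : ℝ≥0∞) :=
    hg.eventually_lt_const hr1
  filter_upwards [hev, eventually_ge_atTop 1] with k hk hk1
  have hk0 : (1/(k:ℝ)) * (k:ℝ) = 1 := by
    field_simp
  have hx : (‖BC A ^ k‖₊ : ℝ≥0∞) ≤ (r' : ℝ≥0∞) ^ (k:ℝ) := by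
    calc (‖BC A ^ k‖₊ : ℝ≥0∞) = ((‖BC A ^ k‖₊ : ℝ≥0∞) ^ (1/(k:ℝ))) ^ (k:ℝ) := by
          rw [← ENNReal.rpow_mul, hk0, ENNReal.rpow_one]
      _ ≤ (r' : ℝ≥0∞) ^ (k:ℝ) := ENNReal.rpow_le_rpow hk.le (by positivity)
  rw [ENNReal.rpow_natCast, ← ENNReal.coe_pow, ENNReal.coe_le_coe] at hx
  have hmap : BC A ^ k = (B A ^ k).map (algebraMap ℝ ℂ) := by
    have h0 : BC A = (algebraMap ℝ ℂ).mapMatrix (B A) := rfl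
    rw [h0, ← map_pow, RingHom.mapMatrix_apply]
  rw [hmap, nnnorm_map_complex] at hx
  have : ‖B A ^ k‖ = ((‖B A ^ k‖₊ : ℝ≥0) : ℝ) := rfl
  rw [this]
  exact_mod_cast hx

lemma tendsto_norm_pow (hA : IsExpanding A) :
    Tendsto (fun k => ‖B A ^ k‖) atTop (𝓝 0) := by
  obtain ⟨r, hr, hev⟩ := eventually_geom A hA
  exact squeeze_zero' (Eventually.of_forall fun k => norm_nonneg _) hev
    (tendsto_pow_atTop_nhds_zero_of_lt_one r.coe_nonneg (by exact_mod_cast hr))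

lemma summable_norm_pow (hA : IsExpanding A) :
    Summable (fun k => ‖B A ^ k‖) := by
  obtain ⟨r, hr, hev⟩ := eventually_geom A hA
  refine summable_of_isBigO_nat (summable_geometric_of_lt_one r.coe_nonneg
    (by exact_mod_cast hr)) ?_
  rw [Asymptotics.isBigO_iff]
  refine ⟨1, ?_⟩
  filter_upwards [hev] with k hk
  simpa [abs_of_nonneg (pow_nonneg r.coe_nonneg k)] using hk.trans (le_abs_self _)

section
variable (D : Finset (Fin n → ℤ))

def cv (z : Fin n → ℤ) : Fin n → ℝ := fun i => (z i : ℝ)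

noncomputable def gfun (d : ℕ → (Fin n → ℤ)) : Fin n → ℝ :=
  ∑' k, (B A ^ (k+1)).mulVec (cv (d k))

def K : Set (ℕ → (Fin n → ℤ)) := {d | ∀ k, d k ∈ D}

noncomputable def Mb : ℝ := ∑ d ∈ D, ‖cv d‖

lemma norm_cv_le {d} (hd : d ∈ D) : ‖cv d‖ ≤ Mb D :=
  Finset.single_le_sum (fun _ _ => norm_nonneg _) hd

lemma norm_term_le (k : ℕ) {v} (hv : v ∈ D) :
    ‖(B A ^ (k+1)).mulVec (cv v)‖ ≤ ‖B A ^ (k+1)‖ * Mb D :=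
  (Matrix.linfty_opNorm_mulVec _ _).trans
    (mul_le_mul_of_nonneg_left (norm_cv_le D hv) (norm_nonneg _))

lemma summable_maj (hA : IsExpanding A) :
    Summable (fun k => ‖B A ^ (k+1)‖ * Mb D) :=
  ((summable_nat_add_iff 1).mpr (summable_norm_pow A hA)).mul_right _

lemma hasSum_digits (hA : IsExpanding A) (d : ℕ → (Fin n → ℤ)) (hd : ∀ k, d k ∈ D) :
    HasSum (fun k => (B A ^ (k+1)).mulVec (cv (d k))) (gfun A d) := by
  apply Summable.hasSum
  exact Summable.of_norm_bounded (summable_maj A D hA) (fun k => norm_term_le A D k (hd k))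

lemma T_eq (hA : IsExpanding A) :
    {x : Fin n → ℝ | ∃ d : ℕ → (Fin n → ℤ), (∀ k, d k ∈ D) ∧
      HasSum (fun k => (B A ^ (k + 1)).mulVec (cv (d k))) x} = gfun A '' K D := by
  ext x
  constructor
  · rintro ⟨d, hd, hs⟩
    exact ⟨d, hd, hs.tsum_eq.symm ▸ rfl⟩
  · rintro ⟨d, hd, rfl⟩
    exact ⟨d, hd, hasSum_digits A D hA d hd⟩

lemma isCompact_T (hA : IsExpanding A) : IsCompact (gfun A '' K D) := by
  have hK : IsCompact (K D) := by
    have : K D = Set.pi Set.univ (fun _ : ℕ => (D : Set (Fin n → ℤ))) := by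
      ext d; simp [K, Set.mem_pi]
    rw [this]
    exact isCompact_univ_pi (fun _ => D.finite_toSet.isCompact)
  apply hK.image_of_continuousOn
  apply continuousOn_tsum (u := fun k => ‖B A ^ (k+1)‖ * Mb D)
  · intro k
    apply Continuous.continuousOn
    have h1 : Continuous fun d : ℕ → (Fin n → ℤ) => d k := continuous_apply k
    have h2 : Continuous (cv (n := n)) := continuous_of_discreteTopology
    have h3 : Continuous ((B A ^ (k+1)).mulVecLin) :=
      LinearMap.continuous_of_finiteDimensional _
    exact h3.comp (h2.comp h1)
  · exact summable_maj A D hA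
  · intro k d hd
    exact norm_term_le A D k (hd k)

lemma shift_mem (hA : IsExpanding A) {t : Fin n → ℝ} (ht : t ∈ gfun A '' K D)
    {d : Fin n → ℤ} (hd : d ∈ D) : (B A).mulVec (cv d + t) ∈ gfun A '' K D := by
  rw [← T_eq A D hA] at ht ⊢
  obtain ⟨e, he, hs⟩ := ht
  set d' : ℕ → (Fin n → ℤ) := fun k => Nat.rec d (fun m _ => e m) k with hd'
  refine ⟨d', fun k => by cases k <;> simp [hd', he _, hd], ?_⟩
  have hφ := hs.mapL ((B A).mulVecLin.toContinuousLinearMap)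
  have hφ' : HasSum (fun k => (B A ^ (k + 2)).mulVec (cv (e k)))
      ((B A).mulVec t) := by
    convert hφ using 2 with k
    case e'_3 => rfl
    case e'_6 => rfl
    simp only [LinearMap.coe_toContinuousLinearMap', Matrix.mulVecLin_apply,
      Matrix.mulVec_mulVec]
    rw [show B A * B A ^ (k+1) = B A ^ (k+2) by rw [← pow_succ']]
  have h2 : (fun k : ℕ => (B A ^ (k + 1 + 1)).mulVec (cv (d' (k + 1))))
      = fun k => (B A ^ (k + 2)).mulVec (cv (e k)) := rfl
  have h3 := (hasSum_nat_add_iff (f := fun k => (B A ^ (k+1)).mulVec (cv (d' k))) 1).mp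
    (by rw [h2]; exact hφ')
  simp only [Finset.range_one, Finset.sum_singleton] at h3
  convert h3 using 1
  case e'_3 => rfl
  show (B A).mulVec (cv d + t) = (B A).mulVec t + (B A ^ (0+1)).mulVec (cv (d' 0))
  rw [Matrix.mulVec_add, pow_one, add_comm]
  rfl


def SS : Set (Fin n → ℝ) :=
  {y | ∃ t ∈ gfun A '' K D, ∃ z : Fin n → ℤ, y = t + cv z}

lemma cv_add (a b : Fin n → ℤ) : cv (a + b) = cv a + cv b := by
  ext i; simp [cv]

lemma cv_mulVec (w : Fin n → ℤ) : cv (A.mulVec w) = (AR A).mulVec (cv w) := by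
  ext i
  simp only [cv, Matrix.mulVec, dotProduct, Matrix.map_apply]
  push_cast
  rfl

lemma B_SS (hA : IsExpanding A)
    (hD : ∀ z : Fin n → ℤ, ∃! d : Fin n → ℤ, d ∈ D ∧ ∃ w : Fin n → ℤ, z = d + A.mulVec w)
    {y : Fin n → ℝ} (hy : y ∈ SS A D) : (B A).mulVec y ∈ SS A D := by
  obtain ⟨t, ht, z, rfl⟩ := hy
  obtain ⟨d, ⟨hdD, w, hzw⟩, -⟩ := hD z
  refine ⟨(B A).mulVec (cv d + t), shift_mem A D hA ht hdD, w, ?_⟩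
  rw [hzw, cv_add, cv_mulVec]
  rw [show t + (cv d + (AR A).mulVec (cv w)) = (cv d + t) + (AR A).mulVec (cv w) by ring]
  rw [Matrix.mulVec_add, Matrix.mulVec_mulVec, B_mul_AR A hA, Matrix.one_mulVec]

lemma Bpow_SS (hA : IsExpanding A)
    (hD : ∀ z : Fin n → ℤ, ∃! d : Fin n → ℤ, d ∈ D ∧ ∃ w : Fin n → ℤ, z = d + A.mulVec w)
    (m : ℕ) {y : Fin n → ℝ} (hy : y ∈ SS A D) : (B A ^ m).mulVec y ∈ SS A D := by
  induction m generalizing y with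
  | zero => simpa [Matrix.one_mulVec] using hy
  | succ m ih =>
    have := ih (B_SS A D hA hD hy)
    rwa [Matrix.mulVec_mulVec, ← pow_succ] at this

lemma isClosed_SS (hA : IsExpanding A) : IsClosed (SS A D) := by
  obtain ⟨R, hR⟩ := (isCompact_T A D hA).isBounded.subset_closedBall 0
  have hR0 : (0:ℝ) ≤ max R 0 := le_max_right _ _
  have hRT : gfun A '' K D ⊆ Metric.closedBall 0 (max R 0) :=
    hR.trans (Metric.closedBall_subset_closedBall (le_max_left _ _))
  rw [← closure_subset_iff_isClosed]
  intro x hx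
  set R' := max R 0 with hR'
  set C : ℝ := R' + ‖x‖ + 1 with hC
  have hfinm : Set.Finite {m : ℤ | |(m:ℝ)| ≤ C} := by
    apply Set.Finite.subset (Finset.Icc (-(⌈C⌉)) ⌈C⌉).finite_toSet
    intro m hm
    simp only [Set.mem_setOf_eq, abs_le] at hm
    simp only [Finset.coe_Icc, Set.mem_Icc]
    constructor
    · have h2 : ((-(⌈C⌉) : ℤ) : ℝ) ≤ (m:ℝ) := by
        push_cast
        exact le_trans (neg_le_neg (Int.le_ceil C)) hm.1
      exact_mod_cast h2
    · exact_mod_cast hm.2.trans (Int.le_ceil C)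
  have hFz : Set.Finite {z : Fin n → ℤ | ∀ i, |(z i : ℝ)| ≤ C} := by
    apply Set.Finite.subset (Set.Finite.pi (fun _ : Fin n => hfinm))
    intro z hz
    simp only [Set.mem_univ_pi, Set.mem_setOf_eq]
    exact hz
  set G := ⋃ z ∈ {z : Fin n → ℤ | ∀ i, |(z i : ℝ)| ≤ C},
    (fun t => t + cv z) '' (gfun A '' K D) with hG
  have hGclosed : IsClosed G := by
    apply Set.Finite.isClosed_biUnion hFz
    intro z _
    exact ((isCompact_T A D hA).image (continuous_id.add continuous_const)).isClosed
  have hsub : SS A D ⊆ G ∪ (Metric.ball x 1)ᶜ := by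
    rintro y ⟨t, ht, z, rfl⟩
    by_cases hy : t + cv z ∈ Metric.ball x 1
    · left
      refine Set.mem_biUnion ?_ ⟨t, ht, rfl⟩
      intro i
      have h1 : |(z i : ℝ)| ≤ ‖cv z‖ := by
        simpa [cv, Real.norm_eq_abs] using norm_le_pi_norm (cv z) i
      have ht' : ‖t‖ ≤ R' := by
        simpa [Metric.mem_closedBall, dist_zero_right] using hRT ht
      have hy' : ‖t + cv z - x‖ < 1 := by
        simpa [Metric.mem_ball, dist_eq_norm] using hy
      have h2 : cv z = (t + cv z - x) + (x - t) := by ring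
      have h3 : ‖cv z‖ ≤ ‖t + cv z - x‖ + (‖x‖ + ‖t‖) := by
        have h2' : ‖cv z‖ = ‖t + cv z - x + (x - t)‖ := congrArg norm h2
        have h4 : ‖x - t‖ ≤ ‖x‖ + ‖t‖ := norm_sub_le _ _
        have h5 := norm_add_le (t + cv z - x) (x - t)
        linarith
      have := h1.trans h3
      simp only [hC]
      linarith
    · right; exact hy
  have hcl : closure (SS A D) ⊆ G ∪ (Metric.ball x 1)ᶜ :=
    closure_minimal hsub (hGclosed.union Metric.isOpen_ball.isClosed_compl)
  rcases hcl hx with hxG | hxB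
  · simp only [G, Set.mem_iUnion, exists_prop] at hxG
    obtain ⟨z, hz, t, ht, rfl⟩ := hxG
    exact ⟨t, ht, z, rfl⟩
  · exact absurd (Metric.mem_ball_self one_pos) hxB

lemma T_nonempty
    (hD : ∀ z : Fin n → ℤ, ∃! d : Fin n → ℤ, d ∈ D ∧ ∃ w : Fin n → ℤ, z = d + A.mulVec w) :
    (gfun A '' K D).Nonempty := by
  obtain ⟨d0, ⟨hd0, -⟩, -⟩ := hD 0
  exact ⟨gfun A (fun _ => d0), ⟨fun _ => d0, fun _ => hd0, rfl⟩⟩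

lemma pow_mul_pow (hA : IsExpanding A) (m : ℕ) : B A ^ m * AR A ^ m = 1 := by
  induction m with
  | zero => simp
  | succ m ih =>
    rw [pow_succ, pow_succ']
    calc B A ^ m * B A * (AR A * AR A ^ m)
        = B A ^ m * (B A * AR A) * AR A ^ m := by noncomm_ring
      _ = 1 := by rw [B_mul_AR A hA, mul_one, ih]

lemma dense_SS (hA : IsExpanding A)
    (hD : ∀ z : Fin n → ℤ, ∃! d : Fin n → ℤ, d ∈ D ∧ ∃ w : Fin n → ℤ, z = d + A.mulVec w)
    (x : Fin n → ℝ) : x ∈ closure (SS A D) := by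
  rw [Metric.mem_closure_iff]
  intro ε hε
  obtain ⟨t₀, ht₀⟩ := T_nonempty A D hD
  have hmul : Tendsto (fun m => ‖B A ^ m‖ * (1 + ‖t₀‖)) atTop (𝓝 0) := by
    simpa using (tendsto_norm_pow A hA).mul_const (1 + ‖t₀‖)
  obtain ⟨m, hm⟩ := (hmul.eventually_lt_const hε).exists
  set w := (AR A ^ m).mulVec x with hw
  set z : Fin n → ℤ := fun i => ⌊w i⌋ with hz
  refine ⟨(B A ^ m).mulVec (t₀ + cv z), Bpow_SS A D hA hD m ⟨t₀, ht₀, z, rfl⟩, ?_⟩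
  have hxm : (B A ^ m).mulVec w = x := by
    rw [hw, Matrix.mulVec_mulVec, pow_mul_pow A hA m, Matrix.one_mulVec]
  have hdiff : x - (B A ^ m).mulVec (t₀ + cv z) = (B A ^ m).mulVec (w - (t₀ + cv z)) := by
    rw [Matrix.mulVec_sub, hxm]
  rw [dist_eq_norm, hdiff]
  have hb1 : ‖w - cv z‖ ≤ 1 := by
    rw [pi_norm_le_iff_of_nonneg zero_le_one]
    intro i
    have hfr : (w - cv z) i = Int.fract (w i) := rfl
    rw [hfr, Real.norm_eq_abs, abs_of_nonneg (Int.fract_nonneg _)]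
    exact (Int.fract_lt_one _).le
  have hb2 : ‖w - (t₀ + cv z)‖ ≤ 1 + ‖t₀‖ := by
    have he : w - (t₀ + cv z) = (w - cv z) - t₀ := by ring
    rw [he]
    have := norm_sub_le (w - cv z) t₀
    linarith
  refine lt_of_le_of_lt ?_ hm
  exact (Matrix.linfty_opNorm_mulVec _ _).trans
    (mul_le_mul_of_nonneg_left hb2 (norm_nonneg _))

lemma covering (hA : IsExpanding A)
    (hD : ∀ z : Fin n → ℤ, ∃! d : Fin n → ℤ, d ∈ D ∧ ∃ w : Fin n → ℤ, z = d + A.mulVec w)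
    (x : Fin n → ℝ) : ∃ t ∈ gfun A '' K D, ∃ z : Fin n → ℤ, x = t + cv z :=
  (isClosed_SS A D hA).closure_subset (dense_SS A D hA hD x)

def Cb : Set (Fin n → ℝ) := Set.pi Set.univ fun _ : Fin n => Set.Ico (0:ℝ) 1

def cube (z : Fin n → ℤ) : Set (Fin n → ℝ) := (fun y => y - cv z) ⁻¹' (Cb (n := n))

lemma mem_cube {z : Fin n → ℤ} {y : Fin n → ℝ} :
    y ∈ cube (n := n) z ↔ ∀ i, (z i : ℝ) ≤ y i ∧ y i < z i + 1 := by
  simp only [cube, Cb, Set.mem_preimage, Set.mem_pi, Set.mem_univ, forall_true_left,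
    Set.mem_Ico, Pi.sub_apply, cv]
  refine forall_congr' fun i => ?_
  constructor <;> rintro ⟨h1, h2⟩ <;> exact ⟨by linarith, by linarith⟩

lemma cube_disjoint : Pairwise (Function.onFun Disjoint (cube (n := n))) := by
  intro z z' hne
  rw [Function.onFun, Set.disjoint_left]
  intro y hy hy'
  apply hne
  funext i
  rw [mem_cube] at hy hy'
  have e1 : ⌊y i⌋ = z i := Int.floor_eq_iff.mpr ⟨(hy i).1, by exact_mod_cast (hy i).2⟩
  have e2 : ⌊y i⌋ = z' i := Int.floor_eq_iff.mpr ⟨(hy' i).1, by exact_mod_cast (hy' i).2⟩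
  rw [← e1, ← e2]

lemma mem_cube_floor (y : Fin n → ℝ) : y ∈ cube (n := n) (fun i => ⌊y i⌋) := by
  rw [mem_cube]
  intro i
  exact ⟨Int.floor_le _, by exact_mod_cast Int.lt_floor_add_one (y i)⟩

lemma volume_Cb : volume (Cb (n := n)) = 1 := by
  rw [Cb, MeasureTheory.volume_pi_pi]
  simp [Real.volume_Ico]

lemma measurableSet_Cb : MeasurableSet (Cb (n := n)) :=
  MeasurableSet.univ_pi fun _ => measurableSet_Ico

lemma measurableSet_cube (z : Fin n → ℤ) : MeasurableSet (cube (n := n) z) :=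
  measurableSet_Cb.preimage (measurable_id.sub measurable_const)

lemma vol_preimage_add (v : Fin n → ℝ) (S : Set (Fin n → ℝ)) :
    volume ((fun y => y + v) ⁻¹' S) = volume S :=
  measure_preimage_add_right volume v S

lemma main_measure (hA : IsExpanding A)
    (hD : ∀ z : Fin n → ℤ, ∃! d : Fin n → ℤ, d ∈ D ∧ ∃ w : Fin n → ℤ, z = d + A.mulVec w)
    (hnull : ∀ z z' : Fin n → ℤ, z ≠ z' →
      volume (((fun x => x + cv z) '' (gfun A '' K D)) ∩
        ((fun x => x + cv z') '' (gfun A '' K D))) = 0) :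
    volume (gfun A '' K D) = 1 := by
  set TT := gfun A '' K D with hTT
  set Tz : (Fin n → ℤ) → Set (Fin n → ℝ) := fun z => (fun x => x + cv z) '' TT with hTz
  have hTmeas : ∀ z, MeasurableSet (Tz z) := fun z =>
    ((isCompact_T A D hA).image (continuous_id.add continuous_const)).isClosed.measurableSet
  -- step 1 : Cb = ⋃ z, Cb ∩ Tz z
  have h1 : Cb (n := n) = ⋃ z : Fin n → ℤ, (Cb (n := n) ∩ Tz z) := by
    ext x
    constructor
    · intro hx
      obtain ⟨t, ht, z, hxz⟩ := covering A D hA hD x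
      exact Set.mem_iUnion.mpr ⟨z, hx, t, ht, hxz.symm⟩
    · rintro hx
      obtain ⟨z, hz, -⟩ := Set.mem_iUnion.mp hx
      exact hz
  -- step 2 : countable additivity mod null
  have h2 : volume (⋃ z : Fin n → ℤ, (Cb (n := n) ∩ Tz z))
      = ∑' z : Fin n → ℤ, volume (Cb (n := n) ∩ Tz z) := by
    refine measure_iUnion₀ ?_ (fun z => (measurableSet_Cb.inter (hTmeas z)).nullMeasurableSet)
    intro z z' hzz'
    refine measure_mono_null ?_ (hnull z z' hzz')
    rintro y ⟨⟨-, hy1⟩, -, hy2⟩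
    exact ⟨hy1, hy2⟩
  -- step 3 : translation invariance
  have h3 : ∀ z : Fin n → ℤ, volume (Cb (n := n) ∩ Tz z) = volume (cube (-z) ∩ TT) := by
    intro z
    have hpre : (fun y => y + cv z) ⁻¹' (Cb (n := n) ∩ Tz z) = cube (-z) ∩ TT := by
      rw [Set.preimage_inter]
      congr 1
      · ext y
        have : cv (n := n) (-z) = - cv z := by ext i; simp [cv]
        simp [cube, this, sub_neg_eq_add]
      · rw [hTz]
        exact Set.preimage_image_eq _ (add_left_injective (cv z))
    rw [← hpre, vol_preimage_add]
  -- step 4 : reindex by negation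
  have h4 : ∑' z : Fin n → ℤ, volume (cube (n := n) (-z) ∩ TT)
      = ∑' z : Fin n → ℤ, volume (cube (n := n) z ∩ TT) := by
    exact Equiv.tsum_eq (Equiv.neg (Fin n → ℤ)) (fun z => volume (cube (n := n) z ∩ TT))
  -- step 5 : honest additivity
  have h5 : ∑' z : Fin n → ℤ, volume (cube (n := n) z ∩ TT)
      = volume (⋃ z : Fin n → ℤ, (cube (n := n) z ∩ TT)) := by
    refine (measure_iUnion ?_ (fun z => (measurableSet_cube z).inter
      ((isCompact_T A D hA).isClosed.measurableSet))).symm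
    intro z z' hzz'
    exact (cube_disjoint hzz').mono Set.inter_subset_left Set.inter_subset_left
  -- step 6 : cubes cover TT
  have h6 : (⋃ z : Fin n → ℤ, (cube (n := n) z ∩ TT)) = TT := by
    ext x
    constructor
    · intro hx
      obtain ⟨z, -, hz⟩ := Set.mem_iUnion.mp hx
      exact hz
    · intro hx
      exact Set.mem_iUnion.mpr ⟨fun i => ⌊x i⌋, mem_cube_floor x, hx⟩
  calc volume TT = volume (⋃ z : Fin n → ℤ, (cube (n := n) z ∩ TT)) := by rw [h6]
    _ = ∑' z : Fin n → ℤ, volume (cube (n := n) z ∩ TT) := h5.symm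
    _ = ∑' z : Fin n → ℤ, volume (cube (n := n) (-z) ∩ TT) := h4.symm
    _ = ∑' z : Fin n → ℤ, volume (Cb (n := n) ∩ Tz z) := by
        exact tsum_congr fun z => (h3 z).symm
    _ = volume (⋃ z : Fin n → ℤ, (Cb (n := n) ∩ Tz z)) := h2.symm
    _ = volume (Cb (n := n)) := by rw [← h1]
    _ = 1 := volume_Cb

end
end Stmt19

open Stmt19 in
theorem stmt19 {n : ℕ} (A : Matrix (Fin n) (Fin n) ℤ) (hA : IsExpanding A)
    (D : Finset (Fin n → ℤ))
    (hD : ∀ z : Fin n → ℤ, ∃! d : Fin n → ℤ, d ∈ D ∧ ∃ w : Fin n → ℤ, z = d + A.mulVec w)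
    (T : Set (Fin n → ℝ))
    (hT : T = {x : Fin n → ℝ | ∃ d : ℕ → (Fin n → ℤ), (∀ k, d k ∈ D) ∧
      HasSum (fun k => ((A.map (Int.cast : ℤ → ℝ))⁻¹ ^ (k + 1)).mulVec
        (fun i => (d k i : ℝ))) x})
    (hnull : ∀ z z' : Fin n → ℤ, z ≠ z' →
      volume (((fun x => x + fun i => (z i : ℝ)) '' T) ∩
        ((fun x => x + fun i => (z' i : ℝ)) '' T)) = 0) :
    volume T = 1 := by
  have hT2 : T = gfun A '' K D := hT.trans (T_eq A D hA)
  rw [hT2]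
  apply main_measure A D hA hD
  intro z z' hzz'
  have := hnull z z' hzz'
  rw [hT2] at this
  exact this
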